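/- arXiv:1711.02715 — 2 statements merged into one kernel-verified Lean document; each statement's English description precedes it below -/
import Mathlib

section
/- If p(z=1 | x, y=1) = p(z=1 | y=1) (selected completely at random assumption) and p(z=1 | x, y=0) = 0 (only positive examples are labeled), then p(y=1 | x) = p(z=1 | x) / p(z=1 | y=1), provided p(z=1 | y=1) > 0. -/
open MeasureTheory

/-- Conditional probability `p(A | B)` as a real number. -/
noncomputable def cp {Ω : Type*} [MeasurableSpace Ω] (μ : Measure Ω) (A B : Set Ω) : ℝ :=
  (μ (A ∩ B)).toReal / (μ B).toReal

/-- Elkan–Noto Lemma 1: under "selected completely at random" and "only positives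
are labeled", `p(y=1|x) = p(z=1|x) / p(z=1|y=1)`. -/
theorem stmt_0 {Ω : Type*} [MeasurableSpace Ω] (μ : Measure Ω) [IsProbabilityMeasure μ]
    (X Y Z : Set Ω)
    (hX : μ X ≠ 0) (hY : μ Y ≠ 0) (hXY : μ (X ∩ Y) ≠ 0) (hXYc : μ (X ∩ Yᶜ) ≠ 0)
    (hSCAR : cp μ Z (X ∩ Y) = cp μ Z Y)
    (hPU : cp μ Z (X ∩ Yᶜ) = 0)
    (hpos : 0 < cp μ Z Y) :
    cp μ Y X = cp μ Z X / cp μ Z Y := by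
  have hXr : (μ X).toReal ≠ 0 := by
    simp [ENNReal.toReal_eq_zero_iff, hX, measure_ne_top]
  have hXYr : (μ (X ∩ Y)).toReal ≠ 0 := by
    simp [ENNReal.toReal_eq_zero_iff, hXY, measure_ne_top]
  have hXYcr : (μ (X ∩ Yᶜ)).toReal ≠ 0 := by
    simp [ENNReal.toReal_eq_zero_iff, hXYc, measure_ne_top]
  have hnum0 : μ (Z ∩ (X ∩ Yᶜ)) = 0 := by
    unfold cp at hPU
    rw [div_eq_zero_iff] at hPU
    have h0 : (μ (Z ∩ (X ∩ Yᶜ))).toReal = 0 := by tauto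
    rw [ENNReal.toReal_eq_zero_iff] at h0
    have := measure_ne_top μ (Z ∩ (X ∩ Yᶜ))
    tauto
  have hsplit : μ (Z ∩ X) = μ (Z ∩ (X ∩ Y)) := by
    have hset : Z ∩ X = (Z ∩ (X ∩ Y)) ∪ (Z ∩ (X ∩ Yᶜ)) := by
      ext ω
      by_cases h : ω ∈ Y <;> simp [h] <;> tauto
    refine le_antisymm ?_ (measure_mono (Set.inter_subset_inter_right _ Set.inter_subset_left))
    calc μ (Z ∩ X) ≤ μ (Z ∩ (X ∩ Y)) + μ (Z ∩ (X ∩ Yᶜ)) := hset ▸ measure_union_le _ _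
      _ = μ (Z ∩ (X ∩ Y)) := by rw [hnum0, add_zero]
  have hSCAR' : (μ (Z ∩ (X ∩ Y))).toReal = cp μ Z Y * (μ (X ∩ Y)).toReal := by
    unfold cp at hSCAR
    field_simp at hSCAR
    unfold cp
    rw [div_mul_eq_mul_div]
    rw [hSCAR]; ring
  have hZY : cp μ Z Y ≠ 0 := ne_of_gt hpos
  rw [show cp μ Y X = (μ (X ∩ Y)).toReal / (μ X).toReal from by rw [cp, Set.inter_comm]]
  rw [show cp μ Z X = (μ (Z ∩ X)).toReal / (μ X).toReal from rfl]
  rw [hsplit, hSCAR']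
  field_simp
end

section
/- Under the PU assumptions p(z=1 | x, y=0) = 0 and p(z=1 | x, y=1) = c ∈ (0,1], the classifier g(x) := p(z=1|x)/c satisfies: g(x) > 1/2 if and only if p(y=1|x) > 1/2. In other words, thresholding the rescaled discovery probability at 1/2 yields the Bayes-optimal decision for the hidden label y. -/
open MeasureTheory

/-- Thresholding the rescaled discovery probability `g(x) = p(z=1|x)/c` at 1/2 is
equivalent to thresholding the true posterior `p(y=1|x)` at 1/2. -/
theorem stmt_2 {Ω : Type*} [MeasurableSpace Ω] (μ : Measure Ω) [IsProbabilityMeasure μ]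
    (X Y Z : Set Ω) (c : ℝ)
    (hX : μ X ≠ 0) (hY : μ Y ≠ 0) (hXY : μ (X ∩ Y) ≠ 0) (hXYc : μ (X ∩ Yᶜ) ≠ 0)
    (hc0 : 0 < c) (hc1 : c ≤ 1)
    (hSCAR : cp μ Z (X ∩ Y) = c) (hcdef : cp μ Z Y = c)
    (hPU : cp μ Z (X ∩ Yᶜ) = 0) :
    (cp μ Z X / c > 1 / 2 ↔ cp μ Y X > 1 / 2) := by
  have hfin : ∀ S : Set Ω, μ S ≠ ⊤ := fun S => (measure_lt_top μ S).ne
  -- PU: μ (Z ∩ (X ∩ Yᶜ)) = 0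
  have hPU0 : μ (Z ∩ (X ∩ Yᶜ)) = 0 := by
    have hd : (μ (X ∩ Yᶜ)).toReal ≠ 0 := by
      simp [ENNReal.toReal_eq_zero_iff, hXYc, hfin]
    have hn : (μ (Z ∩ (X ∩ Yᶜ))).toReal = 0 := by
      have := hPU
      unfold cp at this
      field_simp [hd] at this
      simpa using this
    rwa [ENNReal.toReal_eq_zero_iff, or_iff_left (hfin _)] at hn
  -- SCAR: (μ (Z ∩ (X ∩ Y))).toReal = c * (μ (X ∩ Y)).toReal
  have hd : (μ (X ∩ Y)).toReal ≠ 0 := by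
    simp [ENNReal.toReal_eq_zero_iff, hXY, hfin]
  have hSCAR' : (μ (Z ∩ (X ∩ Y))).toReal = c * (μ (X ∩ Y)).toReal := by
    have := hSCAR
    unfold cp at this
    field_simp [hd] at this
    linarith [this]
  -- μ (Z ∩ X) = μ (Z ∩ (X ∩ Y))
  have hkey : μ (Z ∩ X) = μ (Z ∩ (X ∩ Y)) := by
    apply le_antisymm
    · calc μ (Z ∩ X) ≤ μ ((Z ∩ (X ∩ Y)) ∪ (Z ∩ (X ∩ Yᶜ))) := by
            apply measure_mono
            intro w ⟨hz, hx⟩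
            by_cases hy : w ∈ Y
            · exact Or.inl ⟨hz, hx, hy⟩
            · exact Or.inr ⟨hz, hx, hy⟩
        _ ≤ μ (Z ∩ (X ∩ Y)) + μ (Z ∩ (X ∩ Yᶜ)) := measure_union_le _ _
        _ = μ (Z ∩ (X ∩ Y)) := by rw [hPU0, add_zero]
    · exact measure_mono (Set.inter_subset_inter_right _ Set.inter_subset_left)
  have hZX : (μ (Z ∩ X)).toReal = c * (μ (X ∩ Y)).toReal := by
    rw [hkey]; exact hSCAR'
  have heq : cp μ Z X / c = cp μ Y X := by
    unfold cp
    rw [hZX, Set.inter_comm Y X]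
    field_simp
  rw [heq]
end
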